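/- If finitely many pairwise disjoint closed balls B̄_{p^{n_i}}(a_i), i = 1,…,m, in ℚ_p are all contained in a closed ball B̄_{p^n}(a), then ∑_{i=1}^m p^{n_i} ≤ p^n. -/

import Mathlib

open MeasureTheory Metric Set

noncomputable section PadicHaarAux

variable {p : ℕ} [Fact p.Prime]

instance : MeasurableSpace ℚ_[p] := borel _
instance : BorelSpace ℚ_[p] := ⟨rfl⟩

/-- The unit ball of `ℚ_p` as a positive compact set. -/
def padicUnitBall : TopologicalSpace.PositiveCompacts ℚ_[p] :=
  ⟨⟨closedBall 0 1, isCompact_closedBall 0 1⟩,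
    ⟨0, mem_interior_iff_mem_nhds.2 (closedBall_mem_nhds 0 one_pos)⟩⟩

/-- The Haar measure on `ℚ_p` normalized so that `ℤ_p` has measure 1. -/
def padicHaar : Measure ℚ_[p] := Measure.addHaarMeasure padicUnitBall

instance : (padicHaar (p := p)).IsAddLeftInvariant :=
  Measure.isAddLeftInvariant_addHaarMeasure _

lemma padicHaar_ball_zero (c : ℚ_[p]) (r : ℝ) :
    padicHaar (p := p) (closedBall c r) = padicHaar (p := p) (closedBall 0 r) := by
  have h : closedBall c r = (fun x => (-c) + x) ⁻¹' closedBall (0 : ℚ_[p]) r := by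
    ext x
    simp [mem_closedBall, dist_eq_norm, neg_add_eq_sub]
  rw [h, measure_preimage_add]

lemma hp_pos : (0 : ℝ) < (p : ℝ) :=
  mod_cast (Fact.out (p := p.Prime)).pos

lemma hpq_ne : ((p : ℚ_[p])) ≠ 0 :=
  Nat.cast_ne_zero.2 (Fact.out (p := p.Prime)).ne_zero

lemma padic_ball_succ_eq (k : ℤ) :
    closedBall (0 : ℚ_[p]) ((p : ℝ) ^ (k + 1)) =
      ⋃ r : Fin p, closedBall ((r : ℚ_[p]) * (p : ℚ_[p]) ^ (-(k + 1))) ((p : ℝ) ^ k) := by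
  have hp : (0 : ℝ) < (p : ℝ) := hp_pos
  ext x
  simp only [mem_iUnion, mem_closedBall, dist_eq_norm, sub_zero]
  constructor
  · intro hx
    have hy : ‖x * (p : ℚ_[p]) ^ (k + 1)‖ ≤ 1 := by
      rw [norm_mul, Padic.norm_p_zpow]
      calc ‖x‖ * (p : ℝ) ^ (-(k + 1))
          ≤ (p : ℝ) ^ (k + 1) * (p : ℝ) ^ (-(k + 1)) := by
            apply mul_le_mul_of_nonneg_right hx (zpow_nonneg hp.le _)
        _ = 1 := by rw [← zpow_add₀ hp.ne', add_neg_cancel, zpow_zero]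
    set z : ℤ_[p] := ⟨x * (p : ℚ_[p]) ^ (k + 1), hy⟩ with hz
    refine ⟨⟨z.appr 1, by simpa using z.appr_lt 1⟩, ?_⟩
    have h1 : ‖z - (z.appr 1 : ℤ_[p])‖ ≤ (p : ℝ) ^ (-(1 : ℕ) : ℤ) :=
      (PadicInt.norm_le_pow_iff_mem_span_pow _ 1).2 (by simpa using z.appr_spec 1)
    have hxid : x - ((⟨z.appr 1, by simpa using z.appr_lt 1⟩ : Fin p) : ℚ_[p]) * (p : ℚ_[p]) ^ (-(k + 1))
        = ((z - (z.appr 1 : ℤ_[p]) : ℤ_[p]) : ℚ_[p]) * (p : ℚ_[p]) ^ (-(k + 1)) := by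
      rw [PadicInt.coe_sub, show ((z : ℤ_[p]) : ℚ_[p]) = x * (p : ℚ_[p]) ^ (k + 1) from rfl]
      push_cast
      rw [sub_mul, mul_assoc, ← zpow_add₀ (hpq_ne (p := p)), add_neg_cancel, zpow_zero, mul_one]
    rw [hxid, norm_mul, Padic.norm_p_zpow, ← PadicInt.norm_def]
    calc ‖z - (z.appr 1 : ℤ_[p])‖ * (p : ℝ) ^ (-(-(k + 1)))
        ≤ (p : ℝ) ^ (-(1 : ℕ) : ℤ) * (p : ℝ) ^ (k + 1) := by
          rw [neg_neg]
          exact mul_le_mul_of_nonneg_right h1 (zpow_nonneg hp.le _)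
      _ = (p : ℝ) ^ k := by
          rw [← zpow_add₀ hp.ne']; norm_num
  · rintro ⟨r, hr⟩
    have hc : ‖((r : ℚ_[p]) * (p : ℚ_[p]) ^ (-(k + 1)))‖ ≤ (p : ℝ) ^ (k + 1) := by
      rw [norm_mul, Padic.norm_p_zpow, neg_neg]
      have : ‖((r : ℚ_[p]))‖ ≤ 1 := by
        have := Padic.norm_int_le_one (p := p) ((r : ℕ) : ℤ)
        simpa using this
      calc ‖((r : ℚ_[p]))‖ * (p : ℝ) ^ (k + 1)
          ≤ 1 * (p : ℝ) ^ (k + 1) :=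
            mul_le_mul_of_nonneg_right this (zpow_nonneg hp.le _)
        _ = (p : ℝ) ^ (k + 1) := one_mul _
    have hxk : (p : ℝ) ^ k ≤ (p : ℝ) ^ (k + 1) :=
      zpow_le_zpow_right₀ (by exact_mod_cast (Fact.out (p := p.Prime)).one_lt.le) (by omega)
    calc ‖x‖ = ‖(x - (r : ℚ_[p]) * (p : ℚ_[p]) ^ (-(k + 1)))
          + (r : ℚ_[p]) * (p : ℚ_[p]) ^ (-(k + 1))‖ := by ring_nf
      _ ≤ max ‖x - (r : ℚ_[p]) * (p : ℚ_[p]) ^ (-(k + 1))‖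
            ‖(r : ℚ_[p]) * (p : ℚ_[p]) ^ (-(k + 1))‖ := Padic.nonarchimedean _ _
      _ ≤ (p : ℝ) ^ (k + 1) := max_le (hr.trans hxk) hc

lemma padic_cosets_disjoint (k : ℤ) :
    Pairwise (Function.onFun Disjoint
      fun r : Fin p => closedBall ((r : ℚ_[p]) * (p : ℚ_[p]) ^ (-(k + 1))) ((p : ℝ) ^ k)) := by
  have hp : (0 : ℝ) < (p : ℝ) := hp_pos
  intro r s hrs
  rw [Function.onFun, Set.disjoint_left]
  intro x hx1 hx2
  simp only [mem_closedBall, dist_eq_norm] at hx1 hx2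
  set d : ℤ := (r : ℤ) - (s : ℤ) with hd
  have hdnorm : ‖((d : ℚ_[p]))‖ * (p : ℝ) ^ (k + 1 : ℤ) ≤ (p : ℝ) ^ k := by
    have key : (d : ℚ_[p]) * (p : ℚ_[p]) ^ (-(k + 1))
        = (x - (s : ℚ_[p]) * (p : ℚ_[p]) ^ (-(k + 1)))
          + -(x - (r : ℚ_[p]) * (p : ℚ_[p]) ^ (-(k + 1))) := by
      push_cast [hd]; ring
    have h3 : ‖(d : ℚ_[p]) * (p : ℚ_[p]) ^ (-(k + 1))‖ ≤ (p : ℝ) ^ k := by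
      rw [key]
      refine le_trans (Padic.nonarchimedean _ _) (max_le hx2 ?_)
      rw [norm_neg]; exact hx1
    rwa [norm_mul, Padic.norm_p_zpow, neg_neg] at h3
  have hdle : ‖((d : ℚ_[p]))‖ ≤ (p : ℝ) ^ (-(1 : ℕ) : ℤ) := by
    have hpk : (0 : ℝ) < (p : ℝ) ^ (k + 1 : ℤ) := zpow_pos hp _
    rw [← le_div_iff₀ hpk] at hdnorm
    calc ‖((d : ℚ_[p]))‖ ≤ (p : ℝ) ^ k / (p : ℝ) ^ (k + 1 : ℤ) := hdnorm
      _ = (p : ℝ) ^ (-(1 : ℕ) : ℤ) := by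
          rw [div_eq_mul_inv, ← zpow_neg, ← zpow_add₀ hp.ne']; norm_num
  have hdvd : ((p : ℤ) ^ 1) ∣ d := (Padic.norm_int_le_pow_iff_dvd d 1).1 hdle
  rw [pow_one] at hdvd
  have habs : |d| < (p : ℤ) := by
    have h1 : (r : ℕ) < p := r.2
    have h2 : (s : ℕ) < p := s.2
    rw [hd, abs_lt]; omega
  have : d = 0 := Int.eq_zero_of_abs_lt_dvd hdvd habs
  apply hrs
  have : (r : ℤ) = (s : ℤ) := by omega
  exact Fin.ext (by exact_mod_cast this)

lemma padicHaar_ball_succ (k : ℤ) :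
    padicHaar (p := p) (closedBall (0 : ℚ_[p]) ((p : ℝ) ^ (k + 1)))
      = p * padicHaar (p := p) (closedBall (0 : ℚ_[p]) ((p : ℝ) ^ k)) := by
  rw [padic_ball_succ_eq k,
    measure_iUnion (padic_cosets_disjoint k) (fun r => measurableSet_closedBall),
    tsum_fintype]
  simp only [padicHaar_ball_zero]
  rw [Finset.sum_const, Finset.card_univ, Fintype.card_fin, nsmul_eq_mul]

lemma padicHaar_ball (k : ℤ) :
    padicHaar (p := p) (closedBall (0 : ℚ_[p]) ((p : ℝ) ^ k))
      = ENNReal.ofReal ((p : ℝ) ^ k) := by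
  have hp0 : (0 : ℝ) < (p : ℝ) := hp_pos
  have hofmul : ∀ j : ℤ,
      ENNReal.ofReal ((p : ℝ) ^ (j + 1)) = p * ENNReal.ofReal ((p : ℝ) ^ j) := by
    intro j
    rw [zpow_add_one₀ hp0.ne', ENNReal.ofReal_mul (zpow_nonneg hp0.le j), mul_comm,
      ENNReal.ofReal_natCast]
  induction k using Int.induction_on with
  | zero =>
      rw [zpow_zero, ENNReal.ofReal_one]
      exact Measure.addHaarMeasure_self
  | succ k ih => rw [padicHaar_ball_succ, ih, ← hofmul]
  | pred k ih =>
      have he : (-(k : ℤ) - 1) + 1 = -(k : ℤ) := by ring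
      have h := padicHaar_ball_succ (p := p) (-(k : ℤ) - 1)
      rw [he, ih] at h
      have h2 : ENNReal.ofReal ((p : ℝ) ^ (-(k : ℤ)))
          = p * ENNReal.ofReal ((p : ℝ) ^ (-(k : ℤ) - 1)) := by
        rw [← hofmul, he]
      have hpne : ((p : ENNReal)) ≠ 0 :=
        Nat.cast_ne_zero.2 (Fact.out (p := p.Prime)).ne_zero
      have hptop : ((p : ENNReal)) ≠ ⊤ := ENNReal.natCast_ne_top p
      have h3 := h.symm.trans h2
      have := congrArg (fun x => (p : ENNReal)⁻¹ * x) h3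
      simpa [← mul_assoc, ENNReal.inv_mul_cancel hpne hptop, one_mul] using this

lemma padicHaar_ball' (c : ℚ_[p]) (k : ℤ) :
    padicHaar (p := p) (closedBall c ((p : ℝ) ^ k)) = ENNReal.ofReal ((p : ℝ) ^ k) := by
  rw [padicHaar_ball_zero, padicHaar_ball]

end PadicHaarAux

theorem padic_disjoint_balls_radii_sum {p : ℕ} [Fact p.Prime] {m : ℕ}
    (a : Fin m → ℚ_[p]) (nn : Fin m → ℤ) (a₀ : ℚ_[p]) (n : ℤ)
    (hdisj : ∀ i j : Fin m, i ≠ j →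
      Disjoint (Metric.closedBall (a i) ((p : ℝ) ^ (nn i)))
        (Metric.closedBall (a j) ((p : ℝ) ^ (nn j))))
    (hsub : ∀ i : Fin m,
      Metric.closedBall (a i) ((p : ℝ) ^ (nn i)) ⊆ Metric.closedBall a₀ ((p : ℝ) ^ n)) :
    ∑ i : Fin m, (p : ℝ) ^ (nn i) ≤ (p : ℝ) ^ n := by
  have hp0 : (0 : ℝ) < (p : ℝ) := hp_pos
  have hsum : ∑ i : Fin m, ENNReal.ofReal ((p : ℝ) ^ (nn i))
      ≤ ENNReal.ofReal ((p : ℝ) ^ n) := by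
    calc ∑ i : Fin m, ENNReal.ofReal ((p : ℝ) ^ (nn i))
        = ∑ i : Fin m, padicHaar (p := p) (Metric.closedBall (a i) ((p : ℝ) ^ (nn i))) := by
          simp only [padicHaar_ball']
      _ = padicHaar (p := p) (⋃ i, Metric.closedBall (a i) ((p : ℝ) ^ (nn i))) := by
          rw [measure_iUnion (fun i j h => hdisj i j h)
            (fun i => measurableSet_closedBall), tsum_fintype]
      _ ≤ padicHaar (p := p) (Metric.closedBall a₀ ((p : ℝ) ^ n)) :=
          measure_mono (Set.iUnion_subset hsub)
      _ = ENNReal.ofReal ((p : ℝ) ^ n) := padicHaar_ball' a₀ n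
  rw [← ENNReal.ofReal_sum_of_nonneg (fun i _ => (zpow_pos hp0 (nn i)).le)] at hsum
  exact (ENNReal.ofReal_le_ofReal_iff (zpow_pos hp0 n).le).1 hsum
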